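/- Let R be a complete discrete valuation ring with uniformizer π whose residue field is algebraically closed of characteristic p ≥ 0. Let n, a, b be positive integers with n not divisible by p, gcd(a, n) = 1 and gcd(b, n) = 1. Then the R-algebra homomorphism ψ from B = R[[s,t]]/(π^{n} − s^{a}·t^{b}) to C = R[[z,w]]/(π − z^{a}·w^{b}) determined by s ↦ z^{n} and t ↦ w^{n} is well defined and injective, and C is a finite B-module generated by the monomials z^{i}·w^{j} with 0 ≤ i < n and 0 ≤ j < n. -/

import Mathlib

/-- The ideal `(π^{m} − z^{a}·w^{b})` of `R[[z,w]] = MvPowerSeries (Fin 2) R`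
(with `z = X 0`, `w = X 1`). -/
noncomputable abbrev stmt15.I (R : Type) [CommRing R] (π : R) (m a b : ℕ) :
    Ideal (MvPowerSeries (Fin 2) R) :=
  Ideal.span {(MvPowerSeries.C (σ := Fin 2) (R := R) π) ^ m
    - (MvPowerSeries.X (0 : Fin 2)) ^ a * (MvPowerSeries.X (1 : Fin 2)) ^ b}

/-- The quotient ring `R[[z,w]]/(π^{m} − z^{a}·w^{b})`. -/
abbrev stmt15.Q (R : Type) [CommRing R] (π : R) (m a b : ℕ) : Type :=
  MvPowerSeries (Fin 2) R ⧸ stmt15.I R π m a b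


namespace stmt15aux
open MvPowerSeries Finsupp

variable {R : Type} [CommRing R]

/-- the exponent `(x, y)` as a `Fin 2 →₀ ℕ` -/
noncomputable def d2 (x y : ℕ) : Fin 2 →₀ ℕ := Finsupp.single 0 x + Finsupp.single 1 y

@[simp] lemma d2_apply0 (x y : ℕ) : d2 x y 0 = x := by simp [d2, Finsupp.single_apply]
@[simp] lemma d2_apply1 (x y : ℕ) : d2 x y 1 = y := by simp [d2, Finsupp.single_apply]

lemma eq_d2 (e : Fin 2 →₀ ℕ) : e = d2 (e 0) (e 1) := by
  ext i
  fin_cases i <;> simp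

lemma d2_inj {x y x' y' : ℕ} : d2 x y = d2 x' y' ↔ x = x' ∧ y = y' := by
  constructor
  · intro h
    constructor
    · have := congrArg (fun f : Fin 2 →₀ ℕ => f 0) h; simpa using this
    · have := congrArg (fun f : Fin 2 →₀ ℕ => f 1) h; simpa using this
  · rintro ⟨rfl, rfl⟩; rfl

lemma d2_le {x y : ℕ} {e : Fin 2 →₀ ℕ} : d2 x y ≤ e ↔ x ≤ e 0 ∧ y ≤ e 1 := by
  rw [Finsupp.le_def, Fin.forall_fin_two]
  simp [d2, Finsupp.single_apply]

lemma single0_eq_d2 (k : ℕ) : (Finsupp.single 0 k : Fin 2 →₀ ℕ) = d2 k 0 := by simp [d2]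
lemma single1_eq_d2 (k : ℕ) : (Finsupp.single 1 k : Fin 2 →₀ ℕ) = d2 0 k := by simp [d2]

lemma u_eq (a b : ℕ) : (X (0 : Fin 2) : MvPowerSeries (Fin 2) R) ^ a * X 1 ^ b
    = monomial (R := R) (d2 a b) 1 := by
  rw [X_pow_eq, X_pow_eq, monomial_mul_monomial, one_mul, d2]

/-- the residue class of an exponent mod `n` -/
def cl (n : ℕ) (e : Fin 2 →₀ ℕ) : ZMod n × ZMod n := ((e 0 : ZMod n), (e 1 : ZMod n))

/-- the projection of a power series onto the part supported in a given class -/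
noncomputable def P (n : ℕ) (c : ZMod n × ZMod n) (g : MvPowerSeries (Fin 2) R) :
    MvPowerSeries (Fin 2) R :=
  fun e => if cl n e = c then MvPowerSeries.coeff (R := R) e g else 0

lemma coeff_P {n : ℕ} {c : ZMod n × ZMod n} {g : MvPowerSeries (Fin 2) R} (e : Fin 2 →₀ ℕ) :
    MvPowerSeries.coeff (R := R) e (P n c g) = if cl n e = c then MvPowerSeries.coeff (R := R) e g else 0 := rfl

lemma cl_eq_zero_iff {n : ℕ} [NeZero n] (e : Fin 2 →₀ ℕ) :
    cl n e = 0 ↔ n ∣ e 0 ∧ n ∣ e 1 := by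
  simp [cl, Prod.ext_iff, ZMod.natCast_eq_zero_iff]

section key
variable {n a b : ℕ} {π : R} {F g : MvPowerSeries (Fin 2) R}

lemma P_sub (n : ℕ) (c : ZMod n × ZMod n) (g h : MvPowerSeries (Fin 2) R) :
    P n c (g - h) = P n c g - P n c h := by
  ext e; simp only [coeff_P, map_sub]; split <;> simp

lemma P_C_mul (n : ℕ) (c : ZMod n × ZMod n) (r : R) (g : MvPowerSeries (Fin 2) R) :
    P n c (C (σ := Fin 2) (R := R) r * g) = C (σ := Fin 2) (R := R) r * P n c g := by
  ext e; simp only [coeff_P, coeff_C_mul]; split <;> simp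

lemma P_u_mul (n a b : ℕ) (c : ZMod n × ZMod n) (g : MvPowerSeries (Fin 2) R) :
    P n c (monomial (R := R) (d2 a b) (1 : R) * g)
      = monomial (R := R) (d2 a b) (1 : R) * P n (c - ((a : ZMod n), (b : ZMod n))) g := by
  ext e
  rw [coeff_P, coeff_monomial_mul, coeff_monomial_mul]
  by_cases hle : d2 a b ≤ e
  · rw [if_pos hle, if_pos hle, coeff_P]
    have h0 : (e - d2 a b) 0 = e 0 - a := by simp [d2, Finsupp.tsub_apply]
    have h1 : (e - d2 a b) 1 = e 1 - b := by simp [d2, Finsupp.tsub_apply]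
    have hle' := d2_le.mp hle
    have hcl : cl n (e - d2 a b) = cl n e - ((a : ZMod n), (b : ZMod n)) := by
      simp only [cl, h0, h1, Prod.mk_sub_mk, Nat.cast_sub hle'.1, Nat.cast_sub hle'.2]
    rw [hcl]
    simp only [sub_left_inj]
    split <;> simp
  · rw [if_neg hle, if_neg hle]
    split <;> rfl

lemma P_of_supported [NeZero n] (hF : ∀ e : Fin 2 →₀ ℕ,
      ¬ (n ∣ e 0 ∧ n ∣ e 1) → MvPowerSeries.coeff (R := R) e F = 0) (c : ZMod n × ZMod n) :
    P n c F = if c = 0 then F else 0 := by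
  ext e
  rw [coeff_P]
  by_cases hc : c = 0
  · subst hc
    rw [if_pos rfl]
    by_cases h : cl n e = 0
    · rw [if_pos h]
    · rw [if_neg h, hF e (by rwa [← cl_eq_zero_iff])]
  · rw [if_neg hc]
    by_cases h : cl n e = c
    · rw [if_pos h, hF e, map_zero]
      rw [← cl_eq_zero_iff, h]
      exact hc
    · rw [if_neg h, map_zero]

/-- the key telescoping identity -/
lemma telescope (hn : 0 < n) (han : Nat.gcd a n = 1)
    (hFg : F = (C (σ := Fin 2) (R := R) π - monomial (R := R) (d2 a b) 1) * g)
    (hF : ∀ e : Fin 2 →₀ ℕ,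
      ¬ (n ∣ e 0 ∧ n ∣ e 1) → MvPowerSeries.coeff (R := R) e F = 0) :
    (C (σ := Fin 2) (R := R) π) ^ (n - 1) * F
      = ((C (σ := Fin 2) (R := R) π) ^ n - (monomial (R := R) (d2 a b) (1 : R)) ^ n) * P n 0 g := by
  haveI : NeZero n := ⟨hn.ne'⟩
  set u : MvPowerSeries (Fin 2) R := monomial (R := R) (d2 a b) 1 with hu
  set Cπ : MvPowerSeries (Fin 2) R := C (σ := Fin 2) (R := R) π with hCπ
  set v : ZMod n × ZMod n := ((a : ZMod n), (b : ZMod n)) with hv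
  have step : ∀ c : ZMod n × ZMod n,
      Cπ * P n c g = u * P n (c - v) g + P n c F := by
    intro c
    have h1 : P n c F = Cπ * P n c g - u * P n (c - v) g := by
      rw [hFg, sub_mul, P_sub, P_C_mul, P_u_mul]
    linear_combination -h1
  set cm : ℕ → ZMod n × ZMod n := fun m => (-((m * a : ℕ) : ZMod n), -((m * b : ℕ) : ZMod n))
    with hcm
  have cm0 : cm 0 = 0 := by simp [hcm]
  have cmsucc : ∀ m : ℕ, cm m - v = cm (m + 1) := by
    intro m
    simp only [hcm, hv, Prod.mk_sub_mk, Prod.mk.injEq]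
    constructor <;> · push_cast; ring
  have cmne : ∀ m : ℕ, 1 ≤ m → m < n → cm m ≠ 0 := by
    intro m h1 h2 h
    have h0 : ((m * a : ℕ) : ZMod n) = 0 := by
      have := congrArg Prod.fst h
      simp only [hcm] at this
      simpa [neg_eq_zero] using this
    have hdvd : n ∣ m * a := (ZMod.natCast_eq_zero_iff _ _).mp h0
    have hnm : n ∣ m := Nat.Coprime.dvd_of_dvd_mul_right (Nat.coprime_comm.mp han) hdvd
    exact absurd (Nat.le_of_dvd (by omega) hnm) (by omega)
  have Q : ∀ m : ℕ, m + 1 ≤ n →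
      Cπ ^ (m + 1) * P n (cm 0) g = u ^ (m + 1) * P n (cm (m + 1)) g + Cπ ^ m * F := by
    intro m
    induction m with
    | zero =>
      intro _
      have h := step (cm 0)
      rw [cmsucc 0] at h
      rw [P_of_supported hF, if_pos cm0] at h
      simpa using h
    | succ m ih =>
      intro hm
      have ih' := ih (by omega)
      have h := step (cm (m + 1))
      rw [cmsucc (m + 1)] at h
      rw [P_of_supported hF, if_neg (cmne (m + 1) (by omega) (by omega))] at h
      calc Cπ ^ (m + 1 + 1) * P n (cm 0) g
          = Cπ * (Cπ ^ (m + 1) * P n (cm 0) g) := by ring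
        _ = Cπ * (u ^ (m + 1) * P n (cm (m + 1)) g + Cπ ^ m * F) := by rw [ih']
        _ = u ^ (m + 1) * (Cπ * P n (cm (m + 1)) g) + Cπ ^ (m + 1) * F := by ring
        _ = u ^ (m + 1) * (u * P n (cm (m + 1 + 1)) g + 0) + Cπ ^ (m + 1) * F := by rw [h]
        _ = u ^ (m + 1 + 1) * P n (cm (m + 1 + 1)) g + Cπ ^ (m + 1) * F := by ring
  have hQ := Q (n - 1) (by omega)
  have hn1 : n - 1 + 1 = n := by omega
  rw [hn1, cm0] at hQ
  have hcmn : cm n = 0 := by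
    have h1 : ((n * a : ℕ) : ZMod n) = 0 := by
      rw [ZMod.natCast_eq_zero_iff]; exact Dvd.intro _ rfl
    have h2 : ((n * b : ℕ) : ZMod n) = 0 := by
      rw [ZMod.natCast_eq_zero_iff]; exact Dvd.intro _ rfl
    simp [hcm, h1, h2, Prod.ext_iff]
  rw [hcmn] at hQ
  linear_combination -hQ
end key

section phi
variable {n : ℕ} {Φ : MvPowerSeries (Fin 2) R →ₐ[R] MvPowerSeries (Fin 2) R}
  (hn : 0 < n)
  (hΦ : ∀ (f : MvPowerSeries (Fin 2) R) (d : Fin 2 →₀ ℕ),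
      MvPowerSeries.coeff (R := R) d (Φ f) =
        if n ∣ d 0 ∧ n ∣ d 1 then
          MvPowerSeries.coeff (R := R)
            (Finsupp.single 0 (d 0 / n) + Finsupp.single 1 (d 1 / n)) f
        else 0)

include hΦ

lemma hPhi' (f : MvPowerSeries (Fin 2) R) (d : Fin 2 →₀ ℕ) :
    MvPowerSeries.coeff (R := R) d (Φ f) =
      if n ∣ d 0 ∧ n ∣ d 1 then
        MvPowerSeries.coeff (R := R) (d2 (d 0 / n) (d 1 / n)) f else 0 := hΦ f d

lemma Phi_supported (f : MvPowerSeries (Fin 2) R) (e : Fin 2 →₀ ℕ)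
    (he : ¬ (n ∣ e 0 ∧ n ∣ e 1)) : MvPowerSeries.coeff (R := R) e (Φ f) = 0 := by
  rw [hΦ, if_neg he]

omit hΦ in
lemma coeff_pull (h' : MvPowerSeries (Fin 2) R) (d : Fin 2 →₀ ℕ) :
    MvPowerSeries.coeff (R := R) d
      ((fun e => MvPowerSeries.coeff (R := R) (d2 (n * e 0) (n * e 1)) h' :
        MvPowerSeries (Fin 2) R)) = MvPowerSeries.coeff (R := R) (d2 (n * d 0) (n * d 1)) h' := rfl

lemma Phi_pull (h' : MvPowerSeries (Fin 2) R)
    (hsupp : ∀ e : Fin 2 →₀ ℕ, ¬ (n ∣ e 0 ∧ n ∣ e 1) → MvPowerSeries.coeff (R := R) e h' = 0) :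
    Φ (fun e => MvPowerSeries.coeff (R := R) (d2 (n * e 0) (n * e 1)) h') = h' := by
  ext e
  refine (hPhi' hΦ _ e).trans ?_
  by_cases h : n ∣ e 0 ∧ n ∣ e 1
  · rw [if_pos h, coeff_pull, d2_apply0, d2_apply1,
      Nat.mul_div_cancel' h.1, Nat.mul_div_cancel' h.2, ← eq_d2]
  · rw [if_neg h, hsupp e h]

include hn in
lemma Phi_injective : Function.Injective Φ := by
  rw [injective_iff_map_eq_zero]
  intro f hf
  ext d
  have h := hPhi' hΦ f (d2 (n * d 0) (n * d 1))
  rw [d2_apply0, d2_apply1, if_pos ⟨Dvd.intro _ rfl, Dvd.intro _ rfl⟩,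
    Nat.mul_div_cancel_left _ hn, Nat.mul_div_cancel_left _ hn, hf, map_zero] at h
  rw [map_zero, eq_d2 d, ← h]

include hn in
lemma Phi_X0 : Φ (X 0) = (X (0 : Fin 2) : MvPowerSeries (Fin 2) R) ^ n := by
  classical
  ext e
  rw [hPhi' hΦ, coeff_X_pow]
  by_cases h : e = Finsupp.single 0 n
  · subst h
    have h0 : (Finsupp.single (0 : Fin 2) n) 0 = n := by simp
    have h1 : (Finsupp.single (0 : Fin 2) n) 1 = 0 := by simp
    simp only [h0, h1]
    rw [if_pos ⟨dvd_refl n, dvd_zero n⟩, Nat.div_self hn, Nat.zero_div, if_true,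
      ← single0_eq_d2, coeff_X, if_pos rfl]
  · rw [if_neg h]
    by_cases hd : n ∣ e 0 ∧ n ∣ e 1
    · rw [if_pos hd, coeff_X, if_neg]
      intro hcon
      apply h
      rw [single0_eq_d2] at hcon
      obtain ⟨hq1, hq2⟩ := d2_inj.mp hcon
      have he0 : e 0 = n := by
        have h3 := Nat.div_mul_cancel hd.1
        rw [hq1] at h3
        omega
      have he1 : e 1 = 0 := by
        have h3 := Nat.div_mul_cancel hd.2
        rw [hq2] at h3
        omega
      rw [eq_d2 e, he0, he1, single0_eq_d2]
    · rw [if_neg hd]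

include hn in
lemma Phi_X1 : Φ (X 1) = (X (1 : Fin 2) : MvPowerSeries (Fin 2) R) ^ n := by
  classical
  ext e
  rw [hPhi' hΦ, coeff_X_pow]
  by_cases h : e = Finsupp.single 1 n
  · subst h
    have h0 : (Finsupp.single (1 : Fin 2) n) 0 = 0 := by simp
    have h1 : (Finsupp.single (1 : Fin 2) n) 1 = n := by simp
    simp only [h0, h1]
    rw [if_pos ⟨dvd_zero n, dvd_refl n⟩, Nat.div_self hn, Nat.zero_div, if_true,
      ← single1_eq_d2, coeff_X, if_pos rfl]
  · rw [if_neg h]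
    by_cases hd : n ∣ e 0 ∧ n ∣ e 1
    · rw [if_pos hd, coeff_X, if_neg]
      intro hcon
      apply h
      rw [single1_eq_d2] at hcon
      obtain ⟨hq1, hq2⟩ := d2_inj.mp hcon
      have he0 : e 0 = 0 := by
        have h3 := Nat.div_mul_cancel hd.1
        rw [hq1] at h3
        omega
      have he1 : e 1 = n := by
        have h3 := Nat.div_mul_cancel hd.2
        rw [hq2] at h3
        omega
      rw [eq_d2 e, he0, he1, single1_eq_d2]
    · rw [if_neg hd]
end phi

lemma C_mul_cancel [IsDomain R] {π : R} (hπ0 : π ≠ 0) {x : MvPowerSeries (Fin 2) R}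
    (h : C (σ := Fin 2) (R := R) π * x = 0) : x = 0 := by
  ext d
  have := congrArg (MvPowerSeries.coeff (R := R) d) h
  rw [coeff_C_mul, map_zero] at this
  rw [map_zero]
  exact (mul_eq_zero.mp this).resolve_left hπ0

lemma pi_reg [IsDomain R] {π : R} (hπ : Prime π) (m a b : ℕ) (hm : 0 < m)
    (f q : MvPowerSeries (Fin 2) R)
    (h : C (σ := Fin 2) (R := R) π * f
      = (C (σ := Fin 2) (R := R) π ^ m - X (0 : Fin 2) ^ a * X 1 ^ b) * q) :
    ∃ q', f = (C (σ := Fin 2) (R := R) π ^ m - X (0 : Fin 2) ^ a * X 1 ^ b) * q' := by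
  set G : MvPowerSeries (Fin 2) R := C (σ := Fin 2) (R := R) π ^ m - X (0 : Fin 2) ^ a * X 1 ^ b with hG
  haveI hpr : (Ideal.span {π} : Ideal R).IsPrime :=
    (Ideal.span_singleton_prime hπ.ne_zero).mpr hπ
  haveI : Nontrivial (R ⧸ Ideal.span {π}) := Ideal.Quotient.nontrivial_iff.mpr hpr.ne_top
  set φ := MvPowerSeries.map (σ := Fin 2) (Ideal.Quotient.mk (Ideal.span {π}))
  have hπ0 : Ideal.Quotient.mk (Ideal.span {π}) π = 0 := by
    rw [Ideal.Quotient.eq_zero_iff_mem]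
    exact Ideal.mem_span_singleton_self π
  have hφG : φ G = -(X (0 : Fin 2) ^ a * X 1 ^ b) := by
    rw [hG, map_sub, map_mul, map_pow, map_pow, map_pow, MvPowerSeries.map_C, hπ0,
      map_zero, zero_pow hm.ne', MvPowerSeries.map_X, MvPowerSeries.map_X, zero_sub]
  have hq0 : φ q = 0 := by
    have h2 := congrArg φ h
    rw [map_mul, map_mul, MvPowerSeries.map_C, hπ0, map_zero, zero_mul, hφG] at h2
    have hne : (X (0 : Fin 2) ^ a * X 1 ^ b :
        MvPowerSeries (Fin 2) (R ⧸ Ideal.span {π})) ≠ 0 := by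
      intro hc
      have := congrArg (MvPowerSeries.coeff (d2 a b)) hc
      rw [u_eq, coeff_monomial_same, map_zero] at this
      exact one_ne_zero this
    rcases mul_eq_zero.mp h2.symm with h3 | h3
    · exact absurd (neg_eq_zero.mp h3) hne
    · exact h3
  have hcoeff : ∀ d : Fin 2 →₀ ℕ, ∃ c, c * π = MvPowerSeries.coeff (R := R) d q := by
    intro d
    rw [← Ideal.mem_span_singleton', ← Ideal.Quotient.eq_zero_iff_mem]
    have := congrArg (MvPowerSeries.coeff d) hq0
    rwa [coeff_map, map_zero] at this
  set q' : MvPowerSeries (Fin 2) R := fun d => Classical.choose (hcoeff d) with hq'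
  have hqq : q = C (σ := Fin 2) (R := R) π * q' := by
    ext d
    rw [coeff_C_mul]
    have := Classical.choose_spec (hcoeff d)
    rw [← this]
    exact (mul_comm _ _)
  refine ⟨q', ?_⟩
  have hzero : C (σ := Fin 2) (R := R) π * (f - G * q') = 0 := by
    rw [mul_sub, h, hqq]
    ring
  have := C_mul_cancel hπ.ne_zero hzero
  linear_combination this

lemma pi_reg_pow [IsDomain R] {π : R} (hπ : Prime π) (m a b : ℕ) (hm : 0 < m)
    (j : ℕ) (f : MvPowerSeries (Fin 2) R)
    (h : C (σ := Fin 2) (R := R) π ^ j * f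
      ∈ Ideal.span {(C (σ := Fin 2) (R := R) π ^ m - X (0 : Fin 2) ^ a * X 1 ^ b :
        MvPowerSeries (Fin 2) R)}) :
    f ∈ Ideal.span {(C (σ := Fin 2) (R := R) π ^ m - X (0 : Fin 2) ^ a * X 1 ^ b :
      MvPowerSeries (Fin 2) R)} := by
  induction j generalizing f with
  | zero => rwa [pow_zero, one_mul] at h
  | succ j ih =>
    have h' : C (σ := Fin 2) (R := R) π ^ j * (C (σ := Fin 2) (R := R) π * f)
        ∈ Ideal.span {(C (σ := Fin 2) (R := R) π ^ m - X (0 : Fin 2) ^ a * X 1 ^ b :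
          MvPowerSeries (Fin 2) R)} := by
      rw [show C (σ := Fin 2) (R := R) π ^ j * (C (σ := Fin 2) (R := R) π * f) = C (σ := Fin 2) (R := R) π ^ (j + 1) * f by ring]
      exact h
    obtain ⟨q, hq⟩ := Ideal.mem_span_singleton'.mp (ih _ h')
    obtain ⟨q', hq'⟩ := pi_reg hπ m a b hm f q (by rw [← hq]; ring)
    exact Ideal.mem_span_singleton'.mpr ⟨q', by rw [hq']; ring⟩

section dec
variable {n : ℕ} {Φ : MvPowerSeries (Fin 2) R →ₐ[R] MvPowerSeries (Fin 2) R}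
  (hn : 0 < n)
  (hΦ : ∀ (f : MvPowerSeries (Fin 2) R) (d : Fin 2 →₀ ℕ),
      MvPowerSeries.coeff (R := R) d (Φ f) =
        if n ∣ d 0 ∧ n ∣ d 1 then
          MvPowerSeries.coeff (R := R)
            (Finsupp.single 0 (d 0 / n) + Finsupp.single 1 (d 1 / n)) f
        else 0)

/-- the (i,j) section of a power series -/
noncomputable def sec (n i j : ℕ) (F : MvPowerSeries (Fin 2) R) : MvPowerSeries (Fin 2) R :=
  fun d => MvPowerSeries.coeff (R := R) (d2 (n * d 0 + i) (n * d 1 + j)) F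

lemma coeff_sec (n i j : ℕ) (F : MvPowerSeries (Fin 2) R) (d : Fin 2 →₀ ℕ) :
    MvPowerSeries.coeff (R := R) d (sec n i j F)
      = MvPowerSeries.coeff (R := R) (d2 (n * d 0 + i) (n * d 1 + j)) F := rfl

include hΦ in
lemma coeff_term {i j : ℕ} (hi : i < n) (hj : j < n) (F : MvPowerSeries (Fin 2) R)
    (e : Fin 2 →₀ ℕ) :
    MvPowerSeries.coeff (R := R) e (monomial (R := R) (d2 i j) 1 * Φ (sec n i j F))
      = if e 0 % n = i ∧ e 1 % n = j then MvPowerSeries.coeff (R := R) e F else 0 := by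
  rw [coeff_monomial_mul]
  by_cases hle : d2 i j ≤ e
  · have hle' := d2_le.mp hle
    rw [if_pos hle, one_mul, hΦ]
    have h0 : (e - d2 i j) 0 = e 0 - i := by simp [d2, Finsupp.tsub_apply]
    have h1 : (e - d2 i j) 1 = e 1 - j := by simp [d2, Finsupp.tsub_apply]
    rw [h0, h1]
    by_cases hdvd : n ∣ e 0 - i ∧ n ∣ e 1 - j
    · rw [if_pos hdvd]
      have hc0 : n * ((e 0 - i) / n) = e 0 - i := Nat.mul_div_cancel' hdvd.1
      have hc1 : n * ((e 1 - j) / n) = e 1 - j := Nat.mul_div_cancel' hdvd.2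
      have hmod0 : e 0 % n = i := by
        obtain ⟨k, hk⟩ := hdvd.1
        have he : e 0 = i + n * k := by omega
        rw [he, Nat.add_mul_mod_self_left, Nat.mod_eq_of_lt hi]
      have hmod1 : e 1 % n = j := by
        obtain ⟨k, hk⟩ := hdvd.2
        have he : e 1 = j + n * k := by omega
        rw [he, Nat.add_mul_mod_self_left, Nat.mod_eq_of_lt hj]
      rw [if_pos ⟨hmod0, hmod1⟩]
      have harg : Finsupp.single (0 : Fin 2) ((e 0 - i) / n) + Finsupp.single 1 ((e 1 - j) / n)
          = d2 ((e 0 - i) / n) ((e 1 - j) / n) := rfl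
      rw [harg, coeff_sec, d2_apply0, d2_apply1, hc0, hc1,
        show e 0 - i + i = e 0 by omega, show e 1 - j + j = e 1 by omega, ← eq_d2 e]
    · rw [if_neg hdvd, if_neg]
      intro hmod
      apply hdvd
      have hd0 := Nat.div_add_mod (e 0) n
      have hd1 := Nat.div_add_mod (e 1) n
      exact ⟨⟨e 0 / n, by omega⟩, ⟨e 1 / n, by omega⟩⟩
  · rw [if_neg hle, if_neg]
    intro hmod
    apply hle
    apply d2_le.mpr
    constructor
    · rw [← hmod.1]; exact Nat.mod_le _ _
    · rw [← hmod.2]; exact Nat.mod_le _ _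

include hn hΦ in
lemma decomp (F : MvPowerSeries (Fin 2) R) :
    F = ∑ i ∈ Finset.range n, ∑ j ∈ Finset.range n,
      monomial (R := R) (d2 i j) 1 * Φ (sec n i j F) := by
  ext e
  rw [map_sum]
  rw [Finset.sum_eq_single (e 0 % n)]
  · rw [map_sum, Finset.sum_eq_single (e 1 % n)]
    · rw [coeff_term hΦ (Nat.mod_lt _ hn) (Nat.mod_lt _ hn), if_pos ⟨rfl, rfl⟩]
    · intro j hj hne
      rw [coeff_term hΦ (Nat.mod_lt _ hn) (Finset.mem_range.mp hj), if_neg]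
      intro hc
      exact hne hc.2.symm
    · intro hmem
      exact absurd (Finset.mem_range.mpr (Nat.mod_lt _ hn)) hmem
  · intro i hi hne
    rw [map_sum, Finset.sum_eq_zero]
    intro j hj
    rw [coeff_term hΦ (Finset.mem_range.mp hi) (Finset.mem_range.mp hj), if_neg]
    intro hc
    exact hne hc.1.symm
  · intro hmem
    exact absurd (Finset.mem_range.mpr (Nat.mod_lt _ hn)) hmem
end dec
end stmt15aux

open stmt15aux MvPowerSeries in
/-- Let `R` be a complete discrete valuation ring with uniformizer `π`
whose residue field is algebraically closed of characteristic `p ≥ 0`.  Let `n, a, b` be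
positive integers with `n` not divisible by `p`, `gcd(a, n) = 1` and `gcd(b, n) = 1`.
Then the `R`-algebra homomorphism `ψ` from `B = R[[s,t]]/(π^n − s^a·t^b)` to
`C = R[[z,w]]/(π − z^a·w^b)` determined by `s ↦ z^n` and `t ↦ w^n` is well defined and
injective, and `C` is a finite `B`-module generated by the monomials `z^i·w^j` with
`0 ≤ i < n` and `0 ≤ j < n`.  The underlying substitution `Φ : R[[s,t]] → R[[z,w]]`,
`s ↦ z^n`, `t ↦ w^n`, is characterized on coefficients: the coefficient of `z^i w^j` in
`Φ f` is the coefficient of `s^{i/n} t^{j/n}` in `f` if `n ∣ i` and `n ∣ j`, and `0`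
otherwise; "well defined" is expressed by the existence of a ring homomorphism `ψ`
between the quotients compatible with `Φ` and the quotient maps. -/
theorem stmt_15
    (R : Type) [CommRing R] [IsDomain R] [IsDiscreteValuationRing R]
    [IsAdicComplete (IsLocalRing.maximalIdeal R) R]
    [IsAlgClosed (IsLocalRing.ResidueField R)]
    (p : ℕ) (hp : p = 0 ∨ p.Prime) [CharP (IsLocalRing.ResidueField R) p]
    (π : R) (hπ : Irreducible π)
    (n a b : ℕ) (hn : 0 < n) (ha : 0 < a) (hb : 0 < b)
    (hpn : ¬ p ∣ n) (han : Nat.gcd a n = 1) (hbn : Nat.gcd b n = 1)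
    (Φ : MvPowerSeries (Fin 2) R →ₐ[R] MvPowerSeries (Fin 2) R)
    (hΦ : ∀ (f : MvPowerSeries (Fin 2) R) (d : Fin 2 →₀ ℕ),
      MvPowerSeries.coeff (R := R) d (Φ f) =
        if n ∣ d 0 ∧ n ∣ d 1 then
          MvPowerSeries.coeff (R := R)
            (Finsupp.single 0 (d 0 / n) + Finsupp.single 1 (d 1 / n)) f
        else 0) :
    ∃ ψ : stmt15.Q R π n a b →+* stmt15.Q R π 1 a b,
      (∀ f : MvPowerSeries (Fin 2) R,
        ψ (Ideal.Quotient.mk (stmt15.I R π n a b) f)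
          = Ideal.Quotient.mk (stmt15.I R π 1 a b) (Φ f)) ∧
      Function.Injective ψ ∧
      (letI : Algebra (stmt15.Q R π n a b) (stmt15.Q R π 1 a b) := ψ.toAlgebra
       Submodule.span (stmt15.Q R π n a b)
         {x : stmt15.Q R π 1 a b | ∃ i j : ℕ, i < n ∧ j < n ∧
           x = (Ideal.Quotient.mk (stmt15.I R π 1 a b) (MvPowerSeries.X (0 : Fin 2))) ^ i
             * (Ideal.Quotient.mk (stmt15.I R π 1 a b) (MvPowerSeries.X (1 : Fin 2))) ^ j}
         = ⊤) := by
  classical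
  haveI : NeZero n := ⟨hn.ne'⟩
  have hprime : Prime π := UniqueFactorizationMonoid.irreducible_iff_prime.mp hπ
  have hPhiC : Φ (C (σ := Fin 2) (R := R) π) = C (σ := Fin 2) (R := R) π := by
    rw [MvPowerSeries.c_eq_algebraMap]
    exact Φ.commutes π
  have hPhiG : Φ ((C (σ := Fin 2) (R := R) π) ^ n - X (0 : Fin 2) ^ a * X 1 ^ b)
      = (C (σ := Fin 2) (R := R) π) ^ n - (X (0 : Fin 2) ^ a * X 1 ^ b : MvPowerSeries (Fin 2) R) ^ n := by
    rw [map_sub, map_pow, hPhiC, map_mul, map_pow, map_pow, Phi_X0 hn hΦ, Phi_X1 hn hΦ]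
    ring
  have hker : ∀ f ∈ stmt15.I R π n a b,
      ((Ideal.Quotient.mk (stmt15.I R π 1 a b)).comp (Φ : MvPowerSeries (Fin 2) R →+*
        MvPowerSeries (Fin 2) R)) f = 0 := by
    intro f hf
    obtain ⟨c, hc⟩ := Ideal.mem_span_singleton.mp hf
    have h1 : ((C (σ := Fin 2) (R := R) π) ^ 1 - X (0 : Fin 2) ^ a * X 1 ^ b : MvPowerSeries (Fin 2) R)
        ∣ Φ f := by
      refine dvd_trans ?_ (Dvd.intro (Φ c) (by rw [← map_mul, ← hc]))
      rw [hPhiG, pow_one]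
      exact sub_dvd_pow_sub_pow _ _ n
    show (Ideal.Quotient.mk (stmt15.I R π 1 a b)) (Φ f) = 0
    rw [Ideal.Quotient.eq_zero_iff_mem]
    exact Ideal.mem_span_singleton.mpr h1
  set ψ : stmt15.Q R π n a b →+* stmt15.Q R π 1 a b :=
    Ideal.Quotient.lift (stmt15.I R π n a b)
      ((Ideal.Quotient.mk (stmt15.I R π 1 a b)).comp (Φ : MvPowerSeries (Fin 2) R →+*
        MvPowerSeries (Fin 2) R)) hker with hψ
  have hcomp : ∀ f : MvPowerSeries (Fin 2) R,
      ψ (Ideal.Quotient.mk (stmt15.I R π n a b) f)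
        = Ideal.Quotient.mk (stmt15.I R π 1 a b) (Φ f) := by
    intro f
    rw [hψ, Ideal.Quotient.lift_mk]
    rfl
  -- core injectivity
  have hcore : ∀ f : MvPowerSeries (Fin 2) R,
      Φ f ∈ stmt15.I R π 1 a b → f ∈ stmt15.I R π n a b := by
    intro f hf
    obtain ⟨g, hg⟩ := Ideal.mem_span_singleton'.mp hf
    have hFg : Φ f = (C (σ := Fin 2) (R := R) π - monomial (R := R) (d2 a b) 1) * g := by
      rw [← hg, ← u_eq, pow_one]
      ring
    have htel := telescope hn han hFg (Phi_supported hΦ f)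
    have hsupp : ∀ e : Fin 2 →₀ ℕ, ¬ (n ∣ e 0 ∧ n ∣ e 1) →
        MvPowerSeries.coeff (R := R) e (P n 0 g) = 0 := by
      intro e he
      rw [coeff_P, if_neg]
      intro hcl
      exact he ((cl_eq_zero_iff e).mp hcl)
    obtain ⟨h, hPh⟩ : ∃ h : MvPowerSeries (Fin 2) R, Φ h = P n 0 g :=
      ⟨_, Phi_pull hΦ (P n 0 g) hsupp⟩
    have h2 : Φ (C (σ := Fin 2) (R := R) π ^ (n - 1) * f)
        = Φ ((C (σ := Fin 2) (R := R) π ^ n - X (0 : Fin 2) ^ a * X 1 ^ b) * h) := by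
      rw [map_mul, map_pow, hPhiC, map_mul, hPhiG, hPh, u_eq]
      exact htel
    have h3 := Phi_injective hn hΦ h2
    exact pi_reg_pow hprime n a b hn (n - 1) f
      (Ideal.mem_span_singleton'.mpr ⟨h, by rw [h3]; ring⟩)
  have hinj : Function.Injective ψ := by
    rw [hψ]
    refine RingHom.lift_injective_of_ker_le_ideal _ hker ?_
    intro f hf
    have := RingHom.mem_ker.mp hf
    exact hcore f (Ideal.Quotient.eq_zero_iff_mem.mp this)
  refine ⟨ψ, hcomp, hinj, ?_⟩
  letI : Algebra (stmt15.Q R π n a b) (stmt15.Q R π 1 a b) := ψ.toAlgebra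
  rw [Submodule.eq_top_iff']
  intro x
  obtain ⟨F, rfl⟩ := Ideal.Quotient.mk_surjective x
  rw [decomp hn hΦ F, map_sum]
  refine Submodule.sum_mem _ fun i hi => ?_
  rw [map_sum]
  refine Submodule.sum_mem _ fun j hj => ?_
  have key : (Ideal.Quotient.mk (stmt15.I R π 1 a b)) (monomial (R := R) (d2 i j) 1 * Φ (sec n i j F))
      = (Ideal.Quotient.mk (stmt15.I R π n a b) (sec n i j F)) •
        ((Ideal.Quotient.mk (stmt15.I R π 1 a b) (X (0 : Fin 2))) ^ i *
         (Ideal.Quotient.mk (stmt15.I R π 1 a b) (X (1 : Fin 2))) ^ j) := by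
    rw [Algebra.smul_def, RingHom.algebraMap_toAlgebra, hcomp, ← map_pow, ← map_pow,
      ← map_mul, ← map_mul, u_eq]
    congr 1
    ring
  rw [key]
  exact Submodule.smul_mem _ _ (Submodule.subset_span
    ⟨i, j, Finset.mem_range.mp hi, Finset.mem_range.mp hj, rfl⟩)
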